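/- Let G be a finite simple graph whose vertex set V is partitioned into two sets B and U such that every edge of G has one endpoint in B and one endpoint in U, and suppose U is nonempty. Then there exists a set S ⊆ B such that the subgraph of G induced on U ∪ S is a tree if and only if there exists a set D ⊆ B such that Break(G, D) is a tree. -/

import Mathlib

/-- The graph obtained from `G` by breaking every vertex in `S`:
each `s ∈ S` of degree `k` is replaced by `k` new degree-1 vertices,
one attached to each former neighbor of `s`. -/
def SimpleGraph.Break {V : Type*} (G : SimpleGraph V) (S : Set V) :
    SimpleGraph ((Sᶜ : Set V) ⊕ {p : V × V // p.1 ∈ S ∧ G.Adj p.1 p.2}) where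
  Adj x y :=
    match x, y with
    | Sum.inl x, Sum.inl y => G.Adj x y
    | Sum.inl x, Sum.inr p => p.1.2 = (x : V)
    | Sum.inr p, Sum.inl x => p.1.2 = (x : V)
    | Sum.inr p, Sum.inr q => p.1.2 = q.1.1 ∧ q.1.2 = p.1.1
  symm := by
    constructor
    rintro (x | p) (y | q) h
    · exact h.symm
    · exact h
    · exact h
    · exact ⟨h.2, h.1⟩
  loopless := by
    constructor
    rintro (x | p) h
    · exact G.irrefl h
    · exact G.ne_of_adj p.2.2 h.1.symm

namespace BreakAux

open SimpleGraph

variable {V : Type*} (G : SimpleGraph V) (D : Set V)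

def ι : G.induce (Dᶜ : Set V) →g G.Break D where
  toFun := Sum.inl
  map_rel' := fun h => h

lemma ι_injective : Function.Injective (ι G D) := fun _ _ h => Sum.inl.inj h

variable {G D}

/-- Lifting paths between `inl` vertices back to the induced graph. -/
lemma lift (hND : ∀ ⦃a b⦄, G.Adj a b → a ∈ D → b ∉ D) :
    ∀ {a b} (w : (G.Break D).Walk a b), w.IsPath →
      ∀ (x y : (Dᶜ : Set V)) (ha : a = Sum.inl x) (hb : b = Sum.inl y),
      ∃ w' : (G.induce (Dᶜ : Set V)).Walk x y, w'.map (ι G D) = w.copy ha hb := by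
  intro a b w
  induction w with
  | nil =>
    intro _ x y ha hb
    subst ha
    obtain rfl : x = y := Sum.inl.inj hb
    exact ⟨SimpleGraph.Walk.nil, rfl⟩
  | @cons a c b h q ih =>
    intro hw x y ha hb
    subst ha; subst hb
    match c, h, q, hw, ih with
    | Sum.inl x', h, q, hw, ih =>
      obtain ⟨q', hq'⟩ := ih hw.of_cons x' y rfl rfl
      rw [SimpleGraph.Walk.copy_rfl_rfl] at hq'
      exact ⟨SimpleGraph.Walk.cons (@id ((G.induce (Dᶜ : Set V)).Adj x x') h) q', by
        rw [SimpleGraph.Walk.copy_rfl_rfl, SimpleGraph.Walk.map_cons, hq']; rfl⟩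
    | Sum.inr p, h, q, hw, _ =>
      exfalso
      have h1 : (p : V × V).2 = (x : V) := h
      match q, hw with
      | SimpleGraph.Walk.cons (v := c') h' q'', hw =>
        match c', h', q'' with
        | Sum.inl x'', h', q'' =>
          have h2 : (p : V × V).2 = (x'' : V) := h'
          have hx : x'' = x := Subtype.ext (h2.symm.trans h1)
          subst hx
          have hnd := hw.support_nodup
          rw [SimpleGraph.Walk.support_cons, SimpleGraph.Walk.support_cons] at hnd
          exact (List.nodup_cons.mp hnd).1
            (List.mem_cons_of_mem _ q''.start_mem_support)
        | Sum.inr p', h', q'' =>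
          have h2 : (p : V × V).2 = (p' : V × V).1 := h'.1
          exact hND p.2.2 p.2.1 (by rw [h2]; exact p'.2.1)

lemma break_isTree_iff (hND : ∀ ⦃a b⦄, G.Adj a b → a ∈ D → b ∉ D)
    (hne : (Dᶜ : Set V).Nonempty) :
    (G.Break D).IsTree ↔ (G.induce (Dᶜ : Set V)).IsTree := by
  classical
  constructor
  · intro hK
    haveI hnonempty : Nonempty (Dᶜ : Set V) := ⟨⟨hne.choose, hne.choose_spec⟩⟩
    constructor
    · refine (SimpleGraph.connected_iff _).mpr ⟨fun x y => ?_, hnonempty⟩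
      obtain ⟨w⟩ := hK.1.preconnected (Sum.inl x) (Sum.inl y)
      obtain ⟨w', -⟩ := lift hND (w.toPath : (G.Break D).Walk _ _) w.toPath.2 x y rfl rfl
      exact ⟨w'⟩
    · intro x c hc
      exact hK.2 (c.map (ι G D)) (hc.map (ι_injective G D))
  · intro hT
    have hreach : ∀ v, ∃ x : (Dᶜ : Set V), (G.Break D).Reachable v (Sum.inl x) := by
      rintro (x | p)
      · exact ⟨x, SimpleGraph.Reachable.refl _⟩
      · refine ⟨⟨(p : V × V).2, hND p.2.2 p.2.1⟩, SimpleGraph.Adj.reachable ?_⟩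
        exact rfl
    have key : ∀ (x : (Dᶜ : Set V)) (c : (G.Break D).Walk (Sum.inl x) (Sum.inl x)),
        ¬ c.IsCycle := by
      intro x c hc
      match c, hc with
      | SimpleGraph.Walk.cons (v := u) h q, hc =>
        rw [SimpleGraph.Walk.cons_isCycle_iff] at hc
        match u, h, q, hc with
        | Sum.inl x', h, q, hc =>
          obtain ⟨hq1, hq2⟩ := hc
          obtain ⟨q', hq'⟩ := lift hND q hq1 x' x rfl rfl
          rw [SimpleGraph.Walk.copy_rfl_rfl] at hq'
          refine hT.2 (q'.cons (@id ((G.induce (Dᶜ : Set V)).Adj x x') h)) ?_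
          rw [SimpleGraph.Walk.cons_isCycle_iff]
          refine ⟨(SimpleGraph.Walk.map_isPath_iff_of_injective (ι_injective G D)).mp
            (hq' ▸ hq1), fun hmem => hq2 ?_⟩
          have h3 := List.mem_map_of_mem (f := Sym2.map (ι G D)) hmem
          rw [← SimpleGraph.Walk.edges_map] at h3
          rw [← hq']
          exact h3
        | Sum.inr p, h, q, hc =>
          have h1 : (p : V × V).2 = (x : V) := h
          match q, hc with
          | SimpleGraph.Walk.cons (v := c') h' q'', hc =>
            match c', h', q'' with
            | Sum.inr p', h', _ =>
              have h2 : (p : V × V).2 = (p' : V × V).1 := h'.1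
              exact hND p.2.2 p.2.1 (by rw [h2]; exact p'.2.1)
            | Sum.inl x'', h', q'' =>
              have h2 : (p : V × V).2 = (x'' : V) := h'
              have hx : x'' = x := Subtype.ext (h2.symm.trans h1)
              subst hx
              match q'' with
              | SimpleGraph.Walk.nil =>
                refine hc.2 ?_
                rw [Sym2.eq_swap]
                simp [SimpleGraph.Walk.edges_cons]
              | SimpleGraph.Walk.cons (v := u4) h4 q4 =>
                have hp := hc.1.of_cons
                have hnd := hp.support_nodup
                rw [SimpleGraph.Walk.support_cons] at hnd
                exact (List.nodup_cons.mp hnd).1 q4.end_mem_support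
    constructor
    · refine (SimpleGraph.connected_iff _).mpr ⟨fun v w => ?_, ⟨Sum.inl ⟨hne.choose, hne.choose_spec⟩⟩⟩
      obtain ⟨xv, hv⟩ := hreach v
      obtain ⟨xw, hw⟩ := hreach w
      exact hv.trans (((hT.1.preconnected xv xw).map (ι G D)).trans hw.symm)
    · rintro (x | p) c hc
      · exact key x c hc
      · match c, hc with
        | SimpleGraph.Walk.cons (v := u) h q, hc =>
          match u, h with
          | Sum.inr p', h =>
            have h2 : (p : V × V).2 = (p' : V × V).1 := h.1
            exact hND p.2.2 p.2.1 (by rw [h2]; exact p'.2.1)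
          | Sum.inl x, h =>
            have hmem : (Sum.inl x : (Dᶜ : Set V) ⊕ _) ∈
                (SimpleGraph.Walk.cons h q).support :=
              List.mem_cons_of_mem _ q.start_mem_support
            exact key x _ (hc.rotate hmem)
end BreakAux

theorem exists_induced_spanning_tree_iff_exists_break_tree {V : Type*} [Fintype V]
    (G : SimpleGraph V) (B U : Set V)
    (hpart : B ∪ U = Set.univ) (hdisj : Disjoint B U)
    (hbip : ∀ ⦃a b⦄, G.Adj a b → (a ∈ B ∧ b ∈ U) ∨ (a ∈ U ∧ b ∈ B))
    (hU : U.Nonempty) :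
    (∃ S ⊆ B, (G.induce (U ∪ S)).IsTree) ↔ (∃ D ⊆ B, (G.Break D).IsTree) := by
  have hBc : Bᶜ = U := by
    ext x
    constructor
    · intro hx
      rcases (show x ∈ B ∪ U by rw [hpart]; trivial) with h | h
      · exact absurd h hx
      · exact h
    · exact fun hx hxB => Set.disjoint_left.mp hdisj hxB hx
  have hND : ∀ D : Set V, D ⊆ B → ∀ ⦃a b⦄, G.Adj a b → a ∈ D → b ∉ D := by
    intro D hD a b hab haD hbD
    rcases hbip hab with ⟨h1, h2⟩ | ⟨h1, h2⟩
    · exact Set.disjoint_left.mp hdisj (hD hbD) h2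
    · exact Set.disjoint_left.mp hdisj (hD haD) h1
  have hne : ∀ D : Set V, D ⊆ B → (Dᶜ : Set V).Nonempty :=
    fun D hD => ⟨hU.choose, fun h => Set.disjoint_left.mp hdisj (hD h) hU.choose_spec⟩
  constructor
  · rintro ⟨S, hS, hT⟩
    refine ⟨B \ S, Set.diff_subset, ?_⟩
    have hset : U ∪ S = ((B \ S)ᶜ : Set V) := by
      rw [Set.diff_eq, Set.compl_inter, compl_compl, hBc]
    rw [hset] at hT
    exact (BreakAux.break_isTree_iff (hND _ Set.diff_subset)
      (hne _ Set.diff_subset)).mpr hT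
  · rintro ⟨D, hD, hT⟩
    refine ⟨B \ D, Set.diff_subset, ?_⟩
    have hset : U ∪ (B \ D) = (Dᶜ : Set V) := by
      ext x
      simp only [Set.mem_union, Set.mem_diff, Set.mem_compl_iff]
      constructor
      · rintro (hxU | ⟨hxB, hxD⟩)
        · exact fun hxD => Set.disjoint_left.mp hdisj (hD hxD) hxU
        · exact hxD
      · intro hxD
        rcases (show x ∈ B ∪ U by rw [hpart]; trivial) with h | h
        · exact Or.inr ⟨h, hxD⟩
        · exact Or.inl h
    rw [hset]
    exact (BreakAux.break_isTree_iff (hND _ hD) (hne _ hD)).mp hT
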